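/- Let Δ ⊆ ℝ^d be a nonempty convex compact set, R : Δ → ℝ convex and L-Lipschitz for ‖·‖₂, and R̄(δ) = inf_{δ'∈Δ}{R(δ') + L‖δ−δ'‖₂}. Let λ₀ ∈ ℝ^d be arbitrary, η > 0, and (δ_t)_{t≥1} an arbitrary sequence in Δ. Define recursively: γ_t is any maximizer of γ ↦ ⟨λ_t, γ⟩ − R̄(γ) over Δ_{δ_t}, and λ_{t+1} = λ_t − η(γ_t − δ_t) (equivalently λ_{t+1} = λ_t + η(δ_t − γ_t)). Then with Λ = ∪_{δ∈Δ̄} ∂R̄(δ) (the union over Δ̄ of the subdifferentials of R̄), for all t: ‖λ_t‖₂ ≤ L + 2η·diam(Δ) + dist(λ₀, Λ + B(0, 2η·diam(Δ))), where B(0,r) is the closed Euclidean ball of radius r centered at 0, the sum of sets is the Minkowski sum, and dist is the Euclidean distance to a set. -/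

import Mathlib

set_option maxHeartbeats 1000000


open Metric Set
open scoped RealInnerProductSpace Pointwise

variable {E : Type*} [NormedAddCommGroup E] [InnerProductSpace ℝ E]

lemma key_aux (L D c s x ρ : ℝ) (hD : 0 < D) (hs : 0 < s) (hcs : c ^ 2 + s ^ 2 = 1)
    (hρpos : 0 < ρ) (lam u v w : E) (hunorm : ‖u‖ = 1) (hvnorm : ‖v‖ = ρ)
    (hvu : ⟪v, u⟫ = 0) (hxdef : ⟪lam, u⟫ = x) (hlamv : ⟪lam, v⟫ = ρ ^ 2)
    (hDu : D • u = w)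
    (hopt2 : ∀ m : E, ‖m‖ = 1 → ⟪lam, D • m - w⟫ ≤ L * ‖D • m - w‖) :
    c * ρ - s * x ≤ L := by
  have huv : ⟪u, v⟫ = 0 := by rw [real_inner_comm]; exact hvu
  set m : E := (1 - 2 * s ^ 2) • u + ((2 * s * c) / ρ) • v with hm
  have hmu : ⟪m, u⟫ = 1 - 2 * s ^ 2 := by
    rw [hm, inner_add_left, real_inner_smul_left, real_inner_smul_left,
      real_inner_self_eq_norm_sq, hunorm, hvu]
    ring
  have hum : ⟪u, m⟫ = 1 - 2 * s ^ 2 := by rw [real_inner_comm]; exact hmu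
  have hmnorm : ‖m‖ ^ 2 = 1 := by
    rw [hm, norm_add_sq_real, real_inner_smul_left, real_inner_smul_right, huv,
      norm_smul, norm_smul, Real.norm_eq_abs, Real.norm_eq_abs, mul_pow, mul_pow,
      sq_abs, sq_abs, hunorm, hvnorm, div_pow]
    have h0 : (2 * s * c) ^ 2 / ρ ^ 2 * ρ ^ 2 = (2 * s * c) ^ 2 := by field_simp
    rw [h0]
    nlinarith
  have hmnorm1 : ‖m‖ = 1 := by nlinarith [norm_nonneg m]
  have hmw : ⟪lam, m⟫ = (1 - 2 * s ^ 2) * x + (2 * s * c) * ρ := by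
    rw [hm, inner_add_right, real_inner_smul_right, real_inner_smul_right, hlamv, hxdef]
    field_simp
  have hmwdist : ‖D • m - w‖ = 2 * s * D := by
    have h1 : ‖D • m - w‖ ^ 2 = (2 * s * D) ^ 2 := by
      rw [← hDu, ← smul_sub, norm_smul, Real.norm_eq_abs, abs_of_pos hD, mul_pow,
        norm_sub_sq_real, hmnorm, hunorm, hmu]
      ring
    have h2 : 0 ≤ 2 * s * D := by positivity
    nlinarith [norm_nonneg (D • m - w)]
  have h3 := hopt2 m hmnorm1
  rw [hmwdist] at h3
  have h4 : ⟪lam, D • m - w⟫ = D * ((1 - 2 * s ^ 2) * x + (2 * s * c) * ρ) - D * x := by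
    rw [inner_sub_right, real_inner_smul_right, hmw, ← hDu, real_inner_smul_right, hxdef]
  rw [h4] at h3
  have h6 : 0 < D * (2 * s) := by positivity
  have h5 : D * (2 * s) * (c * ρ - s * x) ≤ D * (2 * s) * L := by nlinarith
  exact le_of_mul_le_mul_left (by linarith [h5]) h6

lemma crux_inner (L : ℝ) (hL : 0 ≤ L) (Rbar : E → ℝ)
    (hlip : ∀ a b, Rbar a ≤ Rbar b + L * ‖a - b‖)
    (η D : ℝ) (hη : 0 < η) (hD : 0 < D) (lam δ γ : E)
    (hγmem : γ ∈ closedBall δ D)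
    (hγmax : ∀ g ∈ closedBall δ D, ⟪lam, g⟫ - Rbar g ≤ ⟪lam, γ⟫ - Rbar γ)
    (hbig : L + η * D ≤ ‖lam‖)
    (key_aux : ∀ (c s x ρ : ℝ), 0 < s → c ^ 2 + s ^ 2 = 1 →
      0 < ρ → ∀ (u v w : E), ‖u‖ = 1 → ‖v‖ = ρ →
      ⟪v, u⟫ = 0 → ⟪lam, u⟫ = x → ⟪lam, v⟫ = ρ ^ 2 → D • u = w →
      (∀ m : E, ‖m‖ = 1 → ⟪lam, D • m - w⟫ ≤ L * ‖D • m - w‖) →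
      c * ρ - s * x ≤ L) :
    η * D ^ 2 / 2 ≤ ⟪lam, γ - δ⟫ := by
  have hwD : ‖γ - δ‖ ≤ D := mem_closedBall_iff_norm.1 hγmem
  have hlampos : 0 < ‖lam‖ := lt_of_lt_of_le (by nlinarith) hbig
  have hlamgtL : L < ‖lam‖ := by nlinarith
  have hopt : ∀ g ∈ closedBall δ D, ⟪lam, g - γ⟫ ≤ L * ‖g - γ‖ := by
    intro g hg
    have h1 := hγmax g hg
    have h2 := hlip g γ
    have h3 : ⟪lam, g - γ⟫ = ⟪lam, g⟫ - ⟪lam, γ⟫ := by rw [inner_sub_right]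
    linarith
  -- Step 1 : ‖γ - δ‖ = D
  have hwEq : ‖γ - δ‖ = D := by
    by_contra hne
    have hwlt : ‖γ - δ‖ < D := lt_of_le_of_ne hwD hne
    obtain ⟨c, hc⟩ : ∃ c : ℝ, c = (D - ‖γ - δ‖) / ‖lam‖ := ⟨_, rfl⟩
    have hcpos : 0 < c := hc ▸ div_pos (by linarith) hlampos
    have hgball : γ + c • lam ∈ closedBall δ D := by
      rw [mem_closedBall_iff_norm]
      have he : γ + c • lam - δ = (γ - δ) + c • lam := by abel
      rw [he]
      calc ‖(γ - δ) + c • lam‖ ≤ ‖γ - δ‖ + ‖c • lam‖ := norm_add_le _ _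
        _ = ‖γ - δ‖ + c * ‖lam‖ := by rw [norm_smul, Real.norm_eq_abs, abs_of_pos hcpos]
        _ = ‖γ - δ‖ + (D - ‖γ - δ‖) := by rw [hc]; field_simp
        _ = D := by ring
    have h1 := hopt _ hgball
    have h2 : γ + c • lam - γ = c • lam := by abel
    rw [h2, real_inner_smul_right, real_inner_self_eq_norm_sq, norm_smul,
      Real.norm_eq_abs, abs_of_pos hcpos] at h1
    nlinarith [mul_pos hcpos hlampos]
  -- abstract vectors
  obtain ⟨w, hwdef⟩ : ∃ w : E, w = γ - δ := ⟨_, rfl⟩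
  have hwnorm : ‖w‖ = D := by rw [hwdef]; exact hwEq
  obtain ⟨u, hu⟩ : ∃ u : E, u = (D⁻¹ : ℝ) • w := ⟨_, rfl⟩
  have hunorm : ‖u‖ = 1 := by
    rw [hu, norm_smul, Real.norm_eq_abs, abs_of_pos (inv_pos.2 hD), hwnorm]
    field_simp
  have hDu : D • u = w := by rw [hu, smul_smul]; field_simp; simp
  obtain ⟨x, hx⟩ : ∃ x : ℝ, x = ⟪lam, u⟫ := ⟨_, rfl⟩
  obtain ⟨v, hv⟩ : ∃ v : E, v = lam - x • u := ⟨_, rfl⟩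
  obtain ⟨ρ, hρ⟩ : ∃ ρ : ℝ, ρ = ‖v‖ := ⟨_, rfl⟩
  have hρnn : 0 ≤ ρ := hρ ▸ norm_nonneg _
  have hvu : ⟪v, u⟫ = 0 := by
    rw [hv, inner_sub_left, real_inner_smul_left, real_inner_self_eq_norm_sq, hunorm, ← hx]
    ring
  have huv : ⟪u, v⟫ = 0 := by
    rw [hv, inner_sub_right, real_inner_smul_right, real_inner_self_eq_norm_sq, hunorm,
      real_inner_comm lam u, ← hx]
    ring
  have hlamdec : lam = v + x • u := by rw [hv]; abel
  have hlamv : ⟪lam, v⟫ = ρ ^ 2 := by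
    nth_rewrite 1 [hlamdec]
    rw [inner_add_left, real_inner_self_eq_norm_sq, real_inner_smul_left, huv, hρ]
    ring
  have hpyth : ‖lam‖ ^ 2 = x ^ 2 + ρ ^ 2 := by
    rw [hlamdec, norm_add_sq_real, real_inner_smul_right, hvu, norm_smul,
      Real.norm_eq_abs, mul_pow, sq_abs, hunorm, ← hρ]
    ring
  have hlamw : ⟪lam, w⟫ = D * x := by
    rw [← hDu, real_inner_smul_right, ← hx]
  have hopt2 : ∀ m : E, ‖m‖ = 1 → ⟪lam, D • m - w⟫ ≤ L * ‖D • m - w‖ := by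
    intro m hm
    have hball : δ + D • m ∈ closedBall δ D := by
      rw [mem_closedBall_iff_norm]
      have : δ + D • m - δ = D • m := by abel
      rw [this, norm_smul, Real.norm_eq_abs, abs_of_pos hD, hm, mul_one]
    have h1 := hopt _ hball
    have h2 : δ + D • m - γ = D • m - w := by rw [hwdef]; abel
    rwa [h2] at h1
  -- goal in terms of x
  rw [← hwdef, hlamw]
  -- cases
  rcases eq_or_lt_of_le hρnn with hρ0 | hρpos
  · -- ρ = 0 : lam = x • u
    have hv0 : v = 0 := by
      have : ‖v‖ = 0 := by rw [← hρ, ← hρ0]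
      simpa using this
    have hlamxu : lam = x • u := by rw [hlamdec, hv0]; abel
    rcases le_or_gt 0 x with hx0 | hx0
    · -- x = ‖lam‖
      have hxn : x = ‖lam‖ := by
        have : ‖lam‖ = |x| := by
          rw [hlamxu, norm_smul, Real.norm_eq_abs, hunorm, mul_one]
        rw [this, abs_of_nonneg hx0]
      nlinarith
    · -- x < 0 : contradiction via m = -u
      exfalso
      have hmm : ‖(-u : E)‖ = 1 := by rw [norm_neg, hunorm]
      have h1 := hopt2 (-u) hmm
      have h2 : D • (-u : E) - w = -(2 : ℝ) • w := by
        rw [smul_neg, hDu]; module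
      rw [h2, real_inner_smul_right, hlamw, norm_smul] at h1
      simp only [Real.norm_eq_abs] at h1
      rw [hwnorm] at h1
      have habs : |(-2 : ℝ)| = 2 := by norm_num
      rw [habs] at h1
      have hxln : x = -‖lam‖ := by
        have : ‖lam‖ = |x| := by
          rw [hlamxu, norm_smul, Real.norm_eq_abs, hunorm, mul_one]
        rw [this, abs_of_neg hx0]; ring
      nlinarith
  · rcases lt_trichotomy x 0 with hx0 | hx0 | hx0
    · exfalso
      have hcs2 : (ρ / ‖lam‖) ^ 2 + (-x / ‖lam‖) ^ 2 = 1 := by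
        rw [div_pow, div_pow, neg_pow]
        field_simp
        nlinarith [hpyth]
      have hk := key_aux (ρ / ‖lam‖) (-x / ‖lam‖) x ρ
        (div_pos (by linarith : (0:ℝ) < -x) hlampos) hcs2 hρpos u v w hunorm hρ.symm hvu hx.symm
        hlamv hDu hopt2
      rw [div_mul_eq_mul_div, div_mul_eq_mul_div, ← sub_div] at hk
      have : ρ * ρ - -x * x = ‖lam‖ ^ 2 := by nlinarith
      rw [this] at hk
      have h2 : ‖lam‖ ^ 2 / ‖lam‖ = ‖lam‖ := by field_simp
      rw [h2] at hk
      linarith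
    · exfalso
      obtain ⟨s₁, hs₁⟩ : ∃ s₁ : ℝ, s₁ = Real.sqrt ((‖lam‖ ^ 2 - L ^ 2) / 2) / ‖lam‖ := ⟨_, rfl⟩
      obtain ⟨c₁, hc₁⟩ : ∃ c₁ : ℝ, c₁ = Real.sqrt ((‖lam‖ ^ 2 + L ^ 2) / 2) / ‖lam‖ := ⟨_, rfl⟩
      have hnn1 : (0:ℝ) ≤ (‖lam‖ ^ 2 - L ^ 2) / 2 := by nlinarith
      have hnn2 : (0:ℝ) ≤ (‖lam‖ ^ 2 + L ^ 2) / 2 := by nlinarith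
      have hsq1 := Real.sq_sqrt hnn1
      have hsq2 := Real.sq_sqrt hnn2
      have hs₁pos : 0 < s₁ := by
        rw [hs₁]
        apply div_pos _ hlampos
        apply Real.sqrt_pos.2
        nlinarith
      have hcs : c₁ ^ 2 + s₁ ^ 2 = 1 := by
        rw [hs₁, hc₁, div_pow, div_pow, hsq1, hsq2]
        field_simp
        ring
      have hk := key_aux c₁ s₁ x ρ hs₁pos hcs hρpos u v w hunorm hρ.symm hvu hx.symm
        hlamv hDu hopt2
      rw [hx0] at hk
      have hρn : ρ = ‖lam‖ := by nlinarith
      rw [hρn, hc₁] at hk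
      have h2 : Real.sqrt ((‖lam‖ ^ 2 + L ^ 2) / 2) / ‖lam‖ * ‖lam‖
          = Real.sqrt ((‖lam‖ ^ 2 + L ^ 2) / 2) :=
        div_mul_cancel₀ _ (ne_of_gt hlampos)
      rw [h2] at hk
      nlinarith [Real.sqrt_nonneg ((‖lam‖ ^ 2 + L ^ 2) / 2)]
    · have hcs2 : (ρ / ‖lam‖) ^ 2 + (x / ‖lam‖) ^ 2 = 1 := by
        rw [div_pow, div_pow]
        field_simp
        nlinarith [hpyth]
      have hk := key_aux (ρ / ‖lam‖) (x / ‖lam‖) x ρ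
        (div_pos hx0 hlampos) hcs2 hρpos u v w hunorm hρ.symm hvu hx.symm
        hlamv hDu hopt2
      rw [div_mul_eq_mul_div, div_mul_eq_mul_div, ← sub_div] at hk
      have h1 : ρ * ρ - x * x ≤ L * ‖lam‖ := by
        rw [div_le_iff₀ hlampos] at hk
        linarith
      have h3 : ‖lam‖ * (‖lam‖ - L) ≤ 2 * x ^ 2 := by nlinarith [hpyth, h1]
      have h5 : η * D * (η * D) ≤ ‖lam‖ * (‖lam‖ - L) :=
        mul_le_mul (by linarith) (by linarith) (by positivity) (norm_nonneg _)
      have h2 : η ^ 2 * D ^ 2 ≤ 2 * x ^ 2 := by nlinarith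
      have hx2 : η * D / 2 ≤ x := by
        nlinarith [h2, (by positivity : (0:ℝ) < η * D / 2 + x)]
      calc η * D ^ 2 / 2 = (η * D / 2) * D := by ring
        _ ≤ x * D := mul_le_mul_of_nonneg_right hx2 hD.le
        _ = D * x := by ring


lemma crux_inner' {E : Type*} [NormedAddCommGroup E] [InnerProductSpace ℝ E]
    (L : ℝ) (hL : 0 ≤ L) (Rbar : E → ℝ)
    (hlip : ∀ a b, Rbar a ≤ Rbar b + L * ‖a - b‖)
    (η D : ℝ) (hη : 0 < η) (hD : 0 < D) (lam δ γ : E)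
    (hγmem : γ ∈ closedBall δ D)
    (hγmax : ∀ g ∈ closedBall δ D, ⟪lam, g⟫ - Rbar g ≤ ⟪lam, γ⟫ - Rbar γ)
    (hbig : L + η * D ≤ ‖lam‖) :
    η * D ^ 2 / 2 ≤ ⟪lam, γ - δ⟫ :=
  crux_inner L hL Rbar hlip η D hη hD lam δ γ hγmem hγmax hbig
    (fun c s x ρ hs hcs hρ u v w h1 h2 h3 h4 h5 h6 h7 =>
      key_aux L D c s x ρ hD hs hcs hρ lam u v w h1 h2 h3 h4 h5 h6 h7)

/-- boundedness of the dual iterates, arbitrary initialization: for an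
arbitrary `λ₀`, the dual gradient descent iterates satisfy, for all `t`,
`‖λ_t‖ ≤ L + 2η·diam(Δ) + dist(λ₀, Λ + B(0, 2η·diam(Δ)))`, where
`Λ = ∪_{δ ∈ Δ̄} ∂R̄(δ)` is the union of the subdifferentials of the extension `R̄`
over `Δ̄ = ∪_{δ ∈ Δ} Δ_δ`. -/
theorem stmt2 {d : ℕ} (Δ : Set (EuclideanSpace ℝ (Fin d)))
    (hΔne : Δ.Nonempty) (hΔconv : Convex ℝ Δ) (hΔcomp : IsCompact Δ)
    (L : NNReal) (R : EuclideanSpace ℝ (Fin d) → ℝ)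
    (hRconv : ConvexOn ℝ Δ R) (hRlip : LipschitzOnWith L R Δ)
    (Rbar : EuclideanSpace ℝ (Fin d) → ℝ)
    (hRbar : ∀ δ, Rbar δ =
      ⨅ δ' : Δ, (R δ' + (L : ℝ) * ‖δ - (δ' : EuclideanSpace ℝ (Fin d))‖))
    (η : ℝ) (hη : 0 < η)
    (lam γ δ : ℕ → EuclideanSpace ℝ (Fin d))
    (hδ : ∀ t, δ t ∈ Δ)
    (hγmem : ∀ t, γ t ∈ closedBall (δ t) (diam Δ))
    (hγmax : ∀ t, ∀ g ∈ closedBall (δ t) (diam Δ),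
      ⟪lam t, g⟫ - Rbar g ≤ ⟪lam t, γ t⟫ - Rbar (γ t))
    (hrec : ∀ t, lam (t + 1) = lam t - η • (γ t - δ t))
    (Λ : Set (EuclideanSpace ℝ (Fin d)))
    (hΛ : Λ = ⋃ δ' ∈ (⋃ δ'' ∈ Δ, closedBall δ'' (diam Δ)),
      {l : EuclideanSpace ℝ (Fin d) | ∀ y, Rbar δ' + ⟪l, y - δ'⟫ ≤ Rbar y}) :
    ∀ t, ‖lam t‖ ≤ (L : ℝ) + 2 * η * diam Δ +
      Metric.infDist (lam 0) (Λ + closedBall 0 (2 * η * diam Δ)) := by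

  haveI := hΔne.to_subtype
  have hL : (0:ℝ) ≤ (L:ℝ) := L.coe_nonneg
  have hD0 : (0:ℝ) ≤ diam Δ := diam_nonneg
  have hRcont : ContinuousOn R Δ := hRlip.continuousOn
  obtain ⟨z0, hz0Δ, hz0min⟩ := hΔcomp.exists_isMinOn hΔne hRcont
  have hz0min' : ∀ x ∈ Δ, R z0 ≤ R x := fun x hx => isMinOn_iff.1 hz0min x hx
  have hbdd : ∀ y, BddBelow (Set.range fun δ' : Δ =>
      R δ' + (L:ℝ) * ‖y - (δ' : EuclideanSpace ℝ (Fin d))‖) := by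
    intro y
    refine ⟨R z0, ?_⟩
    rintro _ ⟨δ', rfl⟩
    have h1 := hz0min' δ' δ'.2
    have h2 : (0:ℝ) ≤ (L:ℝ) * ‖y - (δ' : EuclideanSpace ℝ (Fin d))‖ := by positivity
    show R z0 ≤ R (δ' : EuclideanSpace ℝ (Fin d)) + (L:ℝ) * ‖y - (δ' : EuclideanSpace ℝ (Fin d))‖
    linarith
  have L1 : ∀ y, ∀ δ' ∈ Δ, Rbar y ≤ R δ' + (L:ℝ) * ‖y - δ'‖ := by
    intro y δ' h
    rw [hRbar]
    exact ciInf_le (hbdd y) ⟨δ', h⟩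
  have L2 : ∀ a b, Rbar a ≤ Rbar b + (L:ℝ) * ‖a - b‖ := by
    intro a b
    rw [hRbar b]
    rw [← sub_le_iff_le_add]
    apply le_ciInf
    intro δ'
    rw [sub_le_iff_le_add]
    have htri : ‖a - (δ' : EuclideanSpace ℝ (Fin d))‖ ≤ ‖a - b‖ + ‖b - δ'‖ := by
      simpa [dist_eq_norm] using dist_triangle a b (δ' : EuclideanSpace ℝ (Fin d))
    have h1 := L1 a δ' δ'.2
    have h2 : (L:ℝ) * ‖a - (δ' : EuclideanSpace ℝ (Fin d))‖ ≤
        (L:ℝ) * (‖a - b‖ + ‖b - δ'‖) := mul_le_mul_of_nonneg_left htri hL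
    have h3 : Rbar a ≤ R δ' + (L:ℝ) * (‖a - b‖ + ‖b - δ'‖) := by linarith
    linarith [h3]
  have L3 : Rbar z0 ≤ R z0 := by
    have := L1 z0 z0 hz0Δ
    simpa using this
  have RbarMin : ∀ y, Rbar z0 ≤ Rbar y := by
    intro y
    rw [hRbar y]
    apply le_ciInf
    intro δ'
    have h1 := hz0min' δ' δ'.2
    have h2 : (0:ℝ) ≤ (L:ℝ) * ‖y - (δ' : EuclideanSpace ℝ (Fin d))‖ := by positivity
    linarith
  have hΛ0 : (0 : EuclideanSpace ℝ (Fin d)) ∈ Λ := by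
    rw [hΛ]
    apply Set.mem_iUnion₂.2
    refine ⟨z0, Set.mem_iUnion₂.2 ⟨z0, hz0Δ, mem_closedBall_self hD0⟩, ?_⟩
    intro y
    simpa using RbarMin y
  have hΛnorm : ∀ l ∈ Λ, ‖l‖ ≤ (L:ℝ) := by
    intro l hl
    rw [hΛ] at hl
    obtain ⟨dh, _, hsub⟩ := Set.mem_iUnion₂.1 hl
    have h1 := hsub (dh + l)
    have h2 : dh + l - dh = l := by abel
    rw [h2] at h1
    rw [real_inner_self_eq_norm_sq] at h1
    have h3 := L2 (dh + l) dh
    rw [h2] at h3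
    have h4 : ‖l‖ ^ 2 ≤ (L:ℝ) * ‖l‖ := by linarith
    rcases eq_or_lt_of_le (norm_nonneg l) with h5 | h5
    · rw [← h5]; exact hL
    · nlinarith
  have hSne : (Λ + closedBall 0 (2 * η * diam Δ)).Nonempty := by
    refine ⟨0 + 0, Set.add_mem_add hΛ0 (mem_closedBall_self ?_)⟩
    positivity
  have hlow : ‖lam 0‖ - ((L:ℝ) + 2 * η * diam Δ) ≤
      Metric.infDist (lam 0) (Λ + closedBall 0 (2 * η * diam Δ)) := by
    by_contra hcon
    push_neg at hcon
    obtain ⟨p, hp, hplt⟩ := (infDist_lt_iff hSne).1 hcon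
    obtain ⟨l, hlΛ, b, hb, rfl⟩ := Set.mem_add.1 hp
    have h1 : ‖b‖ ≤ 2 * η * diam Δ := by
      simpa using mem_closedBall_iff_norm.1 hb
    have h2 : ‖l + b‖ ≤ (L:ℝ) + 2 * η * diam Δ :=
      le_trans (norm_add_le _ _) (add_le_add (hΛnorm l hlΛ) h1)
    have h3 : ‖lam 0‖ - ‖l + b‖ ≤ dist (lam 0) (l + b) := by
      rw [dist_eq_norm]
      exact norm_sub_norm_le _ _
    linarith
  have hK : ∀ t, ‖lam t‖ ≤ max (‖lam 0‖) ((L:ℝ) + 2 * η * diam Δ) := by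
    intro t
    induction t with
    | zero => exact le_max_left _ _
    | succ t ih =>
      have hwD : ‖γ t - δ t‖ ≤ diam Δ := mem_closedBall_iff_norm.1 (hγmem t)
      rcases le_or_gt (‖lam t‖) ((L:ℝ) + η * diam Δ) with hsmall | hbig
      · rw [hrec t]
        calc ‖lam t - η • (γ t - δ t)‖ ≤ ‖lam t‖ + ‖η • (γ t - δ t)‖ := norm_sub_le _ _
          _ ≤ ((L:ℝ) + η * diam Δ) + η * diam Δ := by
              apply add_le_add hsmall
              rw [norm_smul, Real.norm_eq_abs, abs_of_pos hη]
              exact mul_le_mul_of_nonneg_left hwD hη.le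
          _ = (L:ℝ) + 2 * η * diam Δ := by ring
          _ ≤ _ := le_max_right _ _
      · rcases eq_or_lt_of_le hD0 with hDeq | hDpos
        · have hw0 : γ t - δ t = 0 := by
            have : ‖γ t - δ t‖ ≤ 0 := by rw [← hDeq] at hwD; exact hwD
            simpa using le_antisymm this (norm_nonneg _)
          rw [hrec t, hw0, smul_zero, sub_zero]
          exact ih
        · have hinner := crux_inner' (L:ℝ) hL Rbar L2 η (diam Δ) hη hDpos
            (lam t) (δ t) (γ t) (hγmem t) (hγmax t) hbig.le
          have hne : ‖lam (t+1)‖ ≤ ‖lam t‖ := by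
            have hsq : ‖lam t - η • (γ t - δ t)‖ ^ 2 ≤ ‖lam t‖ ^ 2 := by
              rw [norm_sub_sq_real, real_inner_smul_right, norm_smul, Real.norm_eq_abs,
                abs_of_pos hη, mul_pow]
              have hw2 : ‖γ t - δ t‖ ^ 2 ≤ (diam Δ) ^ 2 := by
                nlinarith [norm_nonneg (γ t - δ t)]
              nlinarith [hinner, hη]
            rw [hrec t]
            nlinarith [norm_nonneg (lam t - η • (γ t - δ t)), norm_nonneg (lam t), hsq]
          exact le_trans hne ih
  intro t
  rcases le_total (‖lam 0‖) ((L:ℝ) + 2 * η * diam Δ) with h | h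
  · have h1 := hK t
    rw [max_eq_right h] at h1
    linarith [Metric.infDist_nonneg (s := Λ + closedBall 0 (2 * η * diam Δ)) (x := lam 0)]
  · have h1 := hK t
    rw [max_eq_left h] at h1
    linarith [hlow]
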